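/- For the binary joint distribution p(a,b,λ) with entries p_{00} = (1+a+b+λ)/4, p_{01} = (1+a−b−λ)/4, p_{10} = (1−a+b−λ)/4, p_{11} = (1−a−b+λ)/4 (all nonnegative), the guessing probability P_{X|Y} := Σ_y max_x p_{X=x,Y=y} equals (1 + max(|a|,|λ|))/2. In particular it is independent of b. -/
import Mathlib


noncomputable section

def p00 (a b lam : ℝ) : ℝ := (1 + a + b + lam) / 4
def p01 (a b lam : ℝ) : ℝ := (1 + a - b - lam) / 4
def p10 (a b lam : ℝ) : ℝ := (1 - a + b - lam) / 4
def p11 (a b lam : ℝ) : ℝ := (1 - a - b + lam) / 4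

theorem guessing_probability_formula (a b lam : ℝ)
    (h00 : 0 ≤ p00 a b lam) (h01 : 0 ≤ p01 a b lam)
    (h10 : 0 ≤ p10 a b lam) (h11 : 0 ≤ p11 a b lam) :
    max (p00 a b lam) (p10 a b lam) + max (p01 a b lam) (p11 a b lam)
      = (1 + max |a| |lam|) / 2 := by
  simp only [p00, p01, p10, p11, max_def, abs]
  split_ifs <;> linarith
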